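/- Let u_1 = 8/3 − (2/3)·∛19 (≈ 0.887732). For u ∈ [0, u_1) define a_1(u), a_3(u) = (2+u)/56 ∓ (√2/112)·√(u(6−u)(16−u)/(5−u)) (minus sign for a_1) and a_2(u), a_4(u) = (12−u)/56 ∓ (1/(56√2))·√((6+u)(4−u)(10−u)/(5−u)) (minus sign for a_2). Then for every u ∈ [0, u_1): all four values a_1(u), a_2(u), a_3(u), a_4(u) are positive; they satisfy 2(a_1+a_2+a_3+a_4) = 1, 3(a_1a_2+a_2a_3+a_3a_4+a_4a_1) + 4(a_1a_3+a_2a_4) = 1/4, and 4(a_1a_2a_3+a_2a_3a_4+a_3a_4a_1+a_4a_1a_2) = 9/686 (so that A_4C_4 has the eigenvalues 9/14, 2/7, 1/14, 0, i.e. the 1:2:3 frequency resonance). Moreover a_1(u) → 0 as u → u_1 from the left. -/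

import Mathlib

open Matrix Polynomial

/-- The periodic chain matrix `C_n`: `2` on the diagonal, `-1` at positions
`(i, i+1)` and `(i, i-1)` with indices modulo `n`, and `0` elsewhere. -/
def pchain (n : ℕ) [NeZero n] : Matrix (Fin n) (Fin n) ℝ :=
  Matrix.of fun i j => if i = j then 2 else if j = i + 1 ∨ i = j + 1 then -1 else 0

/-- `u₁ = 8/3 − (2/3)·∛19`. -/
noncomputable def u1 : ℝ := 8 / 3 - (2 / 3) * (19 : ℝ) ^ ((1 : ℝ) / 3)

noncomputable def a1 (u : ℝ) : ℝ :=
  (2 + u) / 56 - (Real.sqrt 2 / 112) * Real.sqrt (u * (6 - u) * (16 - u) / (5 - u))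

noncomputable def a3 (u : ℝ) : ℝ :=
  (2 + u) / 56 + (Real.sqrt 2 / 112) * Real.sqrt (u * (6 - u) * (16 - u) / (5 - u))

noncomputable def a2 (u : ℝ) : ℝ :=
  (12 - u) / 56 - (1 / (56 * Real.sqrt 2)) * Real.sqrt ((6 + u) * (4 - u) * (10 - u) / (5 - u))

noncomputable def a4 (u : ℝ) : ℝ :=
  (12 - u) / 56 + (1 / (56 * Real.sqrt 2)) * Real.sqrt ((6 + u) * (4 - u) * (10 - u) / (5 - u))

lemma charpoly_aux (b1 b2 b3 b4 : ℝ)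
    (h1 : 2*(b1+b2+b3+b4) = 1)
    (h2 : 3*(b1*b2+b2*b3+b3*b4+b4*b1) + 4*(b1*b3+b2*b4) = 1/4)
    (h3 : 4*(b1*b2*b3+b2*b3*b4+b3*b4*b1+b4*b1*b2) = 9/686) :
    (Matrix.diagonal ![b1,b2,b3,b4] * pchain 4).charpoly
      = X * (X - C (9/14)) * (X - C (2/7)) * (X - C (1/14)) := by
  have hM : Matrix.diagonal ![b1,b2,b3,b4] * pchain 4 =
      !![2*b1, -b1, 0, -b1; -b2, 2*b2, -b2, 0; 0, -b3, 2*b3, -b3; -b4, 0, -b4, 2*b4] := by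
    ext i j
    fin_cases i <;> fin_cases j <;>
      simp [pchain, Matrix.mul_apply, Fin.sum_univ_four, Matrix.diagonal] <;>
      ring_nf
  have h1' : (2:ℝ[X])*(C b1 + C b2 + C b3 + C b4) = 1 := by
    have := congrArg C h1; push_cast at this; simpa [Polynomial.C_ofNat] using this
  have h2' : 3*(C b1*C b2+C b2*C b3+C b3*C b4+C b4*C b1) + 4*(C b1*C b3+C b2*C b4) = (C (1/4) : ℝ[X]) := by
    have := congrArg C h2; push_cast at this; simpa [Polynomial.C_ofNat] using this
  have h3' : 4*(C b1*C b2*C b3+C b2*C b3*C b4+C b3*C b4*C b1+C b4*C b1*C b2) = (C (9/686) : ℝ[X]) := by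
    have := congrArg C h3; push_cast at this; simpa [Polynomial.C_ofNat] using this
  rw [hM, Matrix.charpoly]
  rw [show (charmatrix !![2*b1, -b1, 0, -b1; -b2, 2*b2, -b2, 0; 0, -b3, 2*b3, -b3; -b4, 0, -b4, 2*b4]) =
    !![X - C (2*b1), C b1, 0, C b1;
       C b2, X - C (2*b2), C b2, 0;
       0, C b3, X - C (2*b3), C b3;
       C b4, 0, C b4, X - C (2*b4)] from by
    apply Matrix.ext; intro i j
    fin_cases i <;> fin_cases j <;>
      norm_num [charmatrix_apply, Matrix.diagonal_apply, Fin.ext_iff]]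
  apply Polynomial.funext; intro x
  simp [Matrix.det_succ_row_zero, Fin.sum_univ_succ, Fin.succAbove]
  linear_combination (-(x:ℝ)^3) * h1 + x^2 * h2 - x * h3

lemma hc19 : ((19:ℝ) ^ ((1:ℝ)/3))^3 = 19 := by
  rw [← Real.rpow_natCast ((19:ℝ) ^ ((1:ℝ)/3)) 3, ← Real.rpow_mul (by norm_num)]
  norm_num

lemma hu1_root : 3*u1^3 - 24*u1^2 + 64*u1 - 40 = 0 := by
  unfold u1; linear_combination (-8/9 : ℝ) * hc19

lemma hu1_mem : 0 < u1 ∧ u1 ≤ 1 := by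
  have hc := hc19
  have hcnn : (0:ℝ) ≤ (19:ℝ) ^ ((1:ℝ)/3) := Real.rpow_nonneg (by norm_num) _
  constructor
  · unfold u1; nlinarith [sq_nonneg ((19:ℝ) ^ ((1:ℝ)/3)), sq_nonneg ((19:ℝ) ^ ((1:ℝ)/3) - 4)]
  · unfold u1; nlinarith [sq_nonneg ((19:ℝ) ^ ((1:ℝ)/3) - 5/2), sq_nonneg ((19:ℝ) ^ ((1:ℝ)/3) + 5/2)]

set_option maxHeartbeats 1000000 in
lemma aux_all (u p q r : ℝ) (hu0 : 0 ≤ u) (huL : u < u1)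
    (hp : p^2 = 2) (hpnn : 0 ≤ p)
    (hq' : q^2*(5-u) = u*(6-u)*(16-u)) (hqnn : 0 ≤ q)
    (hr' : r^2*(5-u) = (6+u)*(4-u)*(10-u)) (hrnn : 0 ≤ r) :
    (0 < (2+u)/56 - p/112*q ∧ 0 < (12-u)/56 - p/112*r ∧
     0 < (2+u)/56 + p/112*q ∧ 0 < (12-u)/56 + p/112*r) ∧
    2*(((2+u)/56 - p/112*q) + ((12-u)/56 - p/112*r) + ((2+u)/56 + p/112*q) + ((12-u)/56 + p/112*r)) = 1 ∧
    3*(((2+u)/56 - p/112*q)*((12-u)/56 - p/112*r) + ((12-u)/56 - p/112*r)*((2+u)/56 + p/112*q)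
       + ((2+u)/56 + p/112*q)*((12-u)/56 + p/112*r) + ((12-u)/56 + p/112*r)*((2+u)/56 - p/112*q))
      + 4*(((2+u)/56 - p/112*q)*((2+u)/56 + p/112*q) + ((12-u)/56 - p/112*r)*((12-u)/56 + p/112*r)) = 1/4 ∧
    4*(((2+u)/56 - p/112*q)*((12-u)/56 - p/112*r)*((2+u)/56 + p/112*q)
       + ((12-u)/56 - p/112*r)*((2+u)/56 + p/112*q)*((12-u)/56 + p/112*r)
       + ((2+u)/56 + p/112*q)*((12-u)/56 + p/112*r)*((2+u)/56 - p/112*q)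
       + ((12-u)/56 + p/112*r)*((2+u)/56 - p/112*q)*((12-u)/56 - p/112*r)) = 9/686 := by
  have hu1le : u1 ≤ 1 := hu1_mem.2
  have hult : u < 1 := lt_of_lt_of_le huL hu1le
  have h5 : (0:ℝ) < 5 - u := by linarith
  have h5ne : (5:ℝ) - u ≠ 0 := ne_of_gt h5
  have hu1pos : 0 < u1 := hu1_mem.1
  -- p(u) < 0
  have hfac : 0 < 3*(u1^2 + u1*u + u^2) - 24*(u1+u) + 64 := by
    nlinarith [sq_nonneg u, sq_nonneg u1, mul_nonneg hu0 (le_of_lt hu1pos)]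
  have hprod : 0 < (u1 - u) * (3*(u1^2 + u1*u + u^2) - 24*(u1+u) + 64) :=
    mul_pos (sub_pos.2 huL) hfac
  have hplt : 3*u^3 - 24*u^2 + 64*u - 40 < 0 := by nlinarith [hu1_root, hprod]
  have hfa : u*(6-u)*(16-u) < 2*(2+u)^2*(5-u) := by nlinarith [hplt]
  have hga : (6+u)*(4-u)*(10-u) < 2*(12-u)^2*(5-u) := by nlinarith [sq_nonneg u, mul_nonneg hu0 hu0]
  have hq2lt : q^2 < 2*(2+u)^2 := by nlinarith [hq', hfa, h5]
  have hr2lt : r^2 < 2*(12-u)^2 := by nlinarith [hr', hga, h5]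
  have hpq : (p/112*q)^2 < ((2+u)/56)^2 := by
    have e : (p/112*q)^2 = q^2/6272 := by linear_combination (q^2/12544)*hp
    rw [e]; rw [show ((2+u)/56)^2 = (2+u)^2/3136 by ring]; linarith [hq2lt]
  have hpr : (p/112*r)^2 < ((12-u)/56)^2 := by
    have e : (p/112*r)^2 = r^2/6272 := by linear_combination (r^2/12544)*hp
    rw [e]; rw [show ((12-u)/56)^2 = (12-u)^2/3136 by ring]; linarith [hr2lt]
  have hpqnn : 0 ≤ p/112*q := mul_nonneg (div_nonneg hpnn (by norm_num)) hqnn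
  have hprnn : 0 ≤ p/112*r := mul_nonneg (div_nonneg hpnn (by norm_num)) hrnn
  have lt1 : p/112*q < (2+u)/56 := lt_of_pow_lt_pow_left₀ 2 (by linarith) hpq
  have lt2 : p/112*r < (12-u)/56 := lt_of_pow_lt_pow_left₀ 2 (by linarith) hpr
  refine ⟨⟨by linarith, by linarith, by linarith, by linarith⟩, by ring, ?_, ?_⟩
  · have key : (3*(((2+u)/56 - p/112*q)*((12-u)/56 - p/112*r) + ((12-u)/56 - p/112*r)*((2+u)/56 + p/112*q)
       + ((2+u)/56 + p/112*q)*((12-u)/56 + p/112*r) + ((12-u)/56 + p/112*r)*((2+u)/56 - p/112*q))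
      + 4*(((2+u)/56 - p/112*q)*((2+u)/56 + p/112*q) + ((12-u)/56 - p/112*r)*((12-u)/56 + p/112*r))) * (5-u)
        = (1/4) * (5-u) := by
      linear_combination (-(q^2+r^2)*(5-u)/3136) * hp + (-1/1568 : ℝ) * hq' + (-1/1568 : ℝ) * hr'
    exact mul_right_cancel₀ h5ne key
  · have key : (4*(((2+u)/56 - p/112*q)*((12-u)/56 - p/112*r)*((2+u)/56 + p/112*q)
       + ((12-u)/56 - p/112*r)*((2+u)/56 + p/112*q)*((12-u)/56 + p/112*r)
       + ((2+u)/56 + p/112*q)*((12-u)/56 + p/112*r)*((2+u)/56 - p/112*q)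
       + ((12-u)/56 + p/112*r)*((2+u)/56 - p/112*q)*((12-u)/56 - p/112*r))) * (5-u)
        = (9/686) * (5-u) := by
      linear_combination (-(q^2*((12-u)/56)+r^2*((2+u)/56))*(5-u)/1568) * hp
        + (-(12-u)/(56*784) : ℝ) * hq' + (-(2+u)/(56*784) : ℝ) * hr'
    exact mul_right_cancel₀ h5ne key

theorem stmt12 :
    (∀ u ∈ Set.Ico (0 : ℝ) u1,
      (0 < a1 u ∧ 0 < a2 u ∧ 0 < a3 u ∧ 0 < a4 u) ∧
      2 * (a1 u + a2 u + a3 u + a4 u) = 1 ∧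
      3 * (a1 u * a2 u + a2 u * a3 u + a3 u * a4 u + a4 u * a1 u)
        + 4 * (a1 u * a3 u + a2 u * a4 u) = 1 / 4 ∧
      4 * (a1 u * a2 u * a3 u + a2 u * a3 u * a4 u + a3 u * a4 u * a1 u
        + a4 u * a1 u * a2 u) = 9 / 686 ∧
      (Matrix.diagonal ![a1 u, a2 u, a3 u, a4 u] * pchain 4).charpoly =
        X * (X - C (9 / 14)) * (X - C (2 / 7)) * (X - C (1 / 14))) ∧
    Filter.Tendsto a1 (nhdsWithin u1 (Set.Iio u1)) (nhds 0) := by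
  constructor
  · intro u hu
    obtain ⟨hu0, huL⟩ := hu
    have hult : u < 1 := lt_of_lt_of_le huL hu1_mem.2
    have h5 : (0:ℝ) < 5 - u := by linarith
    have h5ne : (5:ℝ) - u ≠ 0 := ne_of_gt h5
    have hp : Real.sqrt 2 ^ 2 = 2 := Real.sq_sqrt (by norm_num)
    have hpnn : (0:ℝ) ≤ Real.sqrt 2 := Real.sqrt_nonneg 2
    have hXnn : 0 ≤ u*(6-u)*(16-u)/(5-u) :=
      div_nonneg (mul_nonneg (mul_nonneg hu0 (by linarith)) (by linarith)) (le_of_lt h5)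
    have hYnn : 0 ≤ (6+u)*(4-u)*(10-u)/(5-u) :=
      div_nonneg (mul_nonneg (mul_nonneg (by linarith) (by linarith)) (by linarith)) (le_of_lt h5)
    have hq : Real.sqrt (u*(6-u)*(16-u)/(5-u)) ^ 2 = u*(6-u)*(16-u)/(5-u) := Real.sq_sqrt hXnn
    have hq' : Real.sqrt (u*(6-u)*(16-u)/(5-u)) ^ 2 * (5-u) = u*(6-u)*(16-u) := by
      rw [hq]; field_simp
    have hr : Real.sqrt ((6+u)*(4-u)*(10-u)/(5-u)) ^ 2 = (6+u)*(4-u)*(10-u)/(5-u) := Real.sq_sqrt hYnn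
    have hr' : Real.sqrt ((6+u)*(4-u)*(10-u)/(5-u)) ^ 2 * (5-u) = (6+u)*(4-u)*(10-u) := by
      rw [hr]; field_simp
    have hC : (1:ℝ)/(56*Real.sqrt 2) = Real.sqrt 2/112 := by
      rw [div_eq_div_iff (by positivity) (by norm_num)]
      linear_combination (-56:ℝ) * hp
    have e1 : a1 u = (2+u)/56 - Real.sqrt 2/112 * Real.sqrt (u*(6-u)*(16-u)/(5-u)) := by rw [a1]
    have e3 : a3 u = (2+u)/56 + Real.sqrt 2/112 * Real.sqrt (u*(6-u)*(16-u)/(5-u)) := by rw [a3]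
    have e2 : a2 u = (12-u)/56 - Real.sqrt 2/112 * Real.sqrt ((6+u)*(4-u)*(10-u)/(5-u)) := by
      rw [a2, hC]
    have e4 : a4 u = (12-u)/56 + Real.sqrt 2/112 * Real.sqrt ((6+u)*(4-u)*(10-u)/(5-u)) := by
      rw [a4, hC]
    obtain ⟨⟨P1, P2, P3, P4⟩, I1, I2, I3⟩ :=
      aux_all u (Real.sqrt 2) (Real.sqrt (u*(6-u)*(16-u)/(5-u)))
        (Real.sqrt ((6+u)*(4-u)*(10-u)/(5-u)))
        hu0 huL hp hpnn hq' (Real.sqrt_nonneg _) hr' (Real.sqrt_nonneg _)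
    have hI1 : 2 * (a1 u + a2 u + a3 u + a4 u) = 1 := by rw [e1, e2, e3, e4]; exact I1
    have hI2 : 3 * (a1 u * a2 u + a2 u * a3 u + a3 u * a4 u + a4 u * a1 u)
        + 4 * (a1 u * a3 u + a2 u * a4 u) = 1 / 4 := by rw [e1, e2, e3, e4]; exact I2
    have hI3 : 4 * (a1 u * a2 u * a3 u + a2 u * a3 u * a4 u + a3 u * a4 u * a1 u
        + a4 u * a1 u * a2 u) = 9 / 686 := by rw [e1, e2, e3, e4]; exact I3
    exact ⟨⟨by rw [e1]; exact P1, by rw [e2]; exact P2, by rw [e3]; exact P3,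
      by rw [e4]; exact P4⟩, hI1, hI2, hI3, charpoly_aux _ _ _ _ hI1 hI2 hI3⟩
  · have hu1pos := hu1_mem.1
    have hu1le := hu1_mem.2
    have h5 : (0:ℝ) < 5 - u1 := by linarith
    have h5ne : (5:ℝ) - u1 ≠ 0 := ne_of_gt h5
    have hcont : ContinuousAt a1 u1 := by
      unfold a1
      apply ContinuousAt.sub (by fun_prop)
      apply ContinuousAt.mul continuousAt_const
      exact Real.continuous_sqrt.continuousAt.comp
        (ContinuousAt.div (by fun_prop) (by fun_prop) h5ne)
    have hX1 : u1*(6-u1)*(16-u1)/(5-u1) = 2*(2+u1)^2 := by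
      rw [div_eq_iff h5ne]; linear_combination hu1_root
    have hs : Real.sqrt (u1*(6-u1)*(16-u1)/(5-u1)) = Real.sqrt 2 * (2+u1) := by
      rw [hX1, show 2*(2+u1)^2 = (Real.sqrt 2 * (2+u1))^2 by
        rw [mul_pow, Real.sq_sqrt (by norm_num : (0:ℝ) ≤ 2)]]
      exact Real.sqrt_sq (mul_nonneg (Real.sqrt_nonneg 2) (by linarith))
    have h0 : a1 u1 = 0 := by
      rw [a1, hs]
      have hp : Real.sqrt 2 ^ 2 = 2 := Real.sq_sqrt (by norm_num)
      linear_combination (-(2+u1)/112) * hp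
    have h2 : Filter.Tendsto a1 (nhdsWithin u1 (Set.Iio u1)) (nhds (a1 u1)) :=
      hcont.continuousWithinAt
    rw [h0] at h2
    exact h2
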